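/- Let S be a finite commutative semigroup. For any a ∈ S, the relative Davenport constant of the quotient semigroup satisfies D_{ā}(S/𝓗) ≤ ψ(a) + 1, where ā denotes the image of a under the canonical epimorphism of S onto S/𝓗. -/

import Mathlib

namespace ZS

variable (S : Type*) [AddCommSemigroup S]

/-- `nsmul' n x = (n+1)·x`, iterated addition in a semigroup. -/
def nsmul' : ℕ → S → S
  | 0, x => x
  | n + 1, x => x + nsmul' n x

/-- The cyclic subsemigroup `⟨x⟩ = {x, 2x, 3x, …}` generated by `x`. -/
def cyc (x : S) : Set S := Set.range fun n => nsmul' S n x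

/-- `x` is periodic if `⟨x⟩` is finite. -/
def IsPeriodicElem (x : S) : Prop := (cyc S x).Finite

/-- A semigroup is periodic if every element is periodic. -/
def IsPeriodicSemigroup : Prop := ∀ x : S, IsPeriodicElem S x

/-- `ρ(x)`: the least `m ≥ 1` such that `m·x` is idempotent (equivalently `m·x = e(x)`). -/
noncomputable def rho (x : S) : ℕ :=
  sInf {n : ℕ | nsmul' S n x + nsmul' S n x = nsmul' S n x} + 1

/-- `e(x)`: the unique idempotent of the finite cyclic semigroup `⟨x⟩`. -/
noncomputable def eIdem (x : S) : S :=
  nsmul' S (sInf {n : ℕ | nsmul' S n x + nsmul' S n x = nsmul' S n x}) x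

/-- The period of a (periodic) element `x`: the least `n > 0` with `(m+n)x = mx` for some `m`. -/
noncomputable def period (x : S) : ℕ :=
  sInf {n : ℕ | 0 < n ∧ ∃ m : ℕ, nsmul' S (m + n) x = nsmul' S m x}

/-- The index of a (periodic) element `x`: the least `k ≥ 1` with `kx = tx` for some `t ≠ k`. -/
noncomputable def indexOf (x : S) : ℕ :=
  sInf {k : ℕ | ∃ t : ℕ, t ≠ k ∧ nsmul' S k x = nsmul' S t x} + 1

/-- `exp(S)`: the lcm of the periods of the elements of `S`, described as the least positive
common multiple of all the periods. -/
noncomputable def expS : ℕ := sInf {n : ℕ | 0 < n ∧ ∀ x : S, period S x ∣ n}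

/-- `K` is a splitting field for exponent `n`: it contains exactly `n` `n`-th roots of unity. -/
def SplitField (K : Type*) [Field K] (n : ℕ) : Prop := Set.ncard {ζ : K | ζ ^ n = 1} = n

/-- Green's preorder `a ≼_𝓗 b`. -/
def gLe (a b : S) : Prop := a = b ∨ ∃ c : S, a = b + c

/-- Green's congruence `a 𝓗 b`. -/
def gEq (a b : S) : Prop := gLe S a b ∧ gLe S b a

/-- `a ≺_𝓗 b`. -/
def gLt (a b : S) : Prop := gLe S a b ∧ ¬ gLe S b a

/-- The Green class `H_a`. -/
def HClass (a : S) : Set S := {x : S | gEq S x a}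

/-- The stabilizer `St(H_a)` of the Green class of `a`. -/
def stab (a : S) : Set S := {c : S | ∀ x ∈ HClass S a, c + x ∈ HClass S a}

theorem gLe_trans {a b c : S} (h1 : gLe S a b) (h2 : gLe S b c) : gLe S a c := by
  rcases h1 with rfl | ⟨u, rfl⟩
  · exact h2
  · rcases h2 with rfl | ⟨v, rfl⟩
    · exact Or.inr ⟨u, rfl⟩
    · exact Or.inr ⟨v + u, by rw [add_assoc]⟩

theorem gLe_add_right {a b : S} (x : S) (h : gLe S a b) : gLe S (a + x) (b + x) := by
  rcases h with rfl | ⟨c, rfl⟩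
  · exact Or.inl rfl
  · exact Or.inr ⟨c, by rw [add_right_comm]⟩

theorem gEq_add {w x y z : S} (h1 : gEq S w x) (h2 : gEq S y z) : gEq S (w + y) (x + z) := by
  have k1 : gLe S (w + y) (x + y) := gLe_add_right S y h1.1
  have k2 : gLe S (x + y) (x + z) := by
    have h := gLe_add_right S x h2.1
    rwa [add_comm z x, add_comm y x] at h
  have k3 : gLe S (x + z) (w + z) := gLe_add_right S z h1.2
  have k4 : gLe S (w + z) (w + y) := by
    have h := gLe_add_right S w h2.2
    rwa [add_comm z w, add_comm y w] at h
  exact ⟨gLe_trans S k1 k2, gLe_trans S k3 k4⟩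

/-- Green's congruence as an additive congruence. -/
def greenCon : AddCon S where
  r a b := gEq S a b
  iseqv := ⟨fun _ => ⟨Or.inl rfl, Or.inl rfl⟩, fun h => ⟨h.2, h.1⟩,
    fun h1 h2 => ⟨gLe_trans S h1.1 h2.1, gLe_trans S h2.2 h1.2⟩⟩
  add' h1 h2 := gEq_add S h1 h2

/-- The quotient semigroup `S/𝓗`. -/
abbrev GQuot := (greenCon S).Quotient

/-- The canonical epimorphism `S → S/𝓗`, `a ↦ ā`. -/
def gq (a : S) : GQuot S := (a : (greenCon S).Quotient)

/-- The sum of a sequence (multiset) of elements of `S`, computed in `WithZero S`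
(the empty sequence having sum the adjoined zero). -/
def msum (T : Multiset S) : WithZero S := (T.map fun x => (x : WithZero S)).sum

/-- A sequence over a commutative semigroup is (additively) reducible if some proper
(possibly empty) subsequence has the same sum; the empty sequence has sum the identity of `S`,
when `S` has one. -/
def IsReducible (T : Multiset S) : Prop :=
  (∃ T' : Multiset S, T' ≤ T ∧ T' ≠ T ∧ T' ≠ 0 ∧ msum S T' = msum S T) ∨
    (T ≠ 0 ∧ ∃ z : S, msum S T = ↑z ∧ ∀ s : S, z + s = s)

/-- The Davenport constant `D(S)` of a commutative semigroup. -/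
noncomputable def Dav : ℕ∞ :=
  sInf {n : ℕ∞ | ∀ T : Multiset S, (T.card : ℕ∞) ≥ n → IsReducible S T}

/-- The relative Davenport constant `D_a(S)`: the largest length of an additively
irreducible sequence with sum `a`. -/
noncomputable def Drel (a : S) : ℕ∞ :=
  sSup {n : ℕ∞ | ∃ T : Multiset S,
    T ≠ 0 ∧ ¬ IsReducible S T ∧ msum S T = ↑a ∧ n = (T.card : ℕ∞)}

/-- The Erdős–Burgess constant `I(S)`: the smallest `ℓ` such that every sequence over `S` of
length (at least) `ℓ` has a nonempty subsequence with idempotent sum. -/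
noncomputable def EB : ℕ∞ :=
  sInf {n : ℕ∞ | ∀ T : Multiset S, (T.card : ℕ∞) ≥ n →
    ∃ T' : Multiset S, T' ≤ T ∧ T' ≠ 0 ∧ ∃ x : S, msum S T' = ↑x ∧ x + x = x}

/-- The Davenport constant of a (semigroup which is a) group: the smallest `ℓ` such that every
sequence of length (at least) `ℓ` has a nonempty subsequence whose sum is the identity element. -/
noncomputable def DavGrpSet : ℕ∞ :=
  sInf {n : ℕ∞ | ∀ T : Multiset S, (T.card : ℕ∞) ≥ n →
    ∃ T' : Multiset S, T' ≤ T ∧ T' ≠ 0 ∧ ∃ z : S, msum S T' = ↑z ∧ ∀ x : S, z + x = x}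

/-- The Davenport constant of a finite abelian group. -/
noncomputable def DavG (G : Type*) [AddCommMonoid G] : ℕ∞ :=
  sInf {n : ℕ∞ | ∀ T : Multiset G, (T.card : ℕ∞) ≥ n →
    ∃ T' : Multiset G, T' ≤ T ∧ T' ≠ 0 ∧ T'.sum = 0}

/-- `ψ(a)`: the largest length of a strictly ascending chain of principal ideals starting at
`(a)`. -/
noncomputable def psi (a : S) : ℕ∞ :=
  sSup {n : ℕ∞ | ∃ ℓ : ℕ, n = (ℓ : ℕ∞) ∧
    ∃ c : ℕ → S, c 0 = a ∧ ∀ i < ℓ, gLt S (c i) (c (i + 1))}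

/-- `Ψ(S)`: the largest length of a strictly ascending chain of principal ideals of `S`. -/
noncomputable def PsiS : ℕ∞ := ⨆ a : S, psi S a

/-- A subset of a semigroup which is a subgroup: closed under addition, with an identity
and inverses. -/
def IsSubgroupSet (T : Set S) : Prop :=
  (∀ x ∈ T, ∀ y ∈ T, x + y ∈ T) ∧
    ∃ z ∈ T, (∀ x ∈ T, z + x = x) ∧ ∀ x ∈ T, ∃ y ∈ T, x + y = z

open Classical in
/-- `ε_a`: `0` if `⟨a⟩` is a group, `1` otherwise. -/
noncomputable def eps (a : S) : ℕ∞ := if IsSubgroupSet S (cyc S a) then 0 else 1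

/-- The Schützenberger maps on the Green class `H_a`: maps `x ↦ c + x` for `c ∈ St(H_a)`. -/
def GammaSet (a : S) : Set (↥(HClass S a) → ↥(HClass S a)) :=
  {f | ∃ c ∈ stab S a, ∀ x : ↥(HClass S a), (↑(f x) : S) = c + ↑x}

/-- The Schützenberger group `Γ(H_a)` (as a type; it is empty when `St(H_a) = ∅`). -/
def Gamma (a : S) : Type _ := ↥(GammaSet S a)

instance (a : S) : Add (Gamma S a) :=
  ⟨fun f g => ⟨f.1 ∘ g.1, by
    obtain ⟨c, hc, hfc⟩ := f.2
    obtain ⟨d, hd, hgd⟩ := g.2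
    refine ⟨c + d, fun x hx => by rw [add_assoc]; exact hc _ (hd x hx), fun x => ?_⟩
    show (↑(f.1 (g.1 x)) : S) = c + d + ↑x
    rw [hfc (g.1 x), hgd x, add_assoc]⟩⟩

instance (a : S) : AddCommSemigroup (Gamma S a) where
  add_assoc f g h := Subtype.ext rfl
  add_comm f g := by
    obtain ⟨c, hc, hfc⟩ := f.2
    obtain ⟨d, hd, hgd⟩ := g.2
    apply Subtype.ext
    funext x
    apply Subtype.ext
    show (↑(f.1 (g.1 x)) : S) = ↑(g.1 (f.1 x))
    rw [hfc (g.1 x), hgd x, hgd (f.1 x), hfc x, add_left_comm]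

/-- `St(H_a)` as a subsemigroup of `S`. -/
def stabSub (a : S) : AddSubsemigroup S where
  carrier := stab S a
  add_mem' := fun {c d} hc hd x hx => by rw [add_assoc]; exact hc _ (hd x hx)

/-- The canonical surjection `π_a : St(H_a) → Γ(H_a)`, `c ↦ γ_c`. -/
def gammaMap (a : S) (c : ↥(stabSub S a)) : Gamma S a :=
  ⟨fun x => ⟨(↑c : S) + ↑x, c.2 ↑x x.2⟩, ⟨↑c, c.2, fun _ => rfl⟩⟩

/-- The semigroup algebra `R[X;S]` of a commutative semigroup, realized inside the monoid
algebra of the monoid obtained from `S` by adjoining an identity element. -/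
abbrev SAlg (R : Type*) [CommRing R] (S : Type*) [AddCommSemigroup S] :=
  AddMonoidAlgebra R (WithZero S)

/-- The monomial `r·X^s` of the semigroup algebra. -/
noncomputable def Xm (R : Type*) [CommRing R] {S : Type*} [AddCommSemigroup S] (s : S) (r : R) :
    SAlg R S := AddMonoidAlgebra.single (↑s) r

/-- The factor `X^s - a·X^{e(s)}` of the semigroup algebra. -/
noncomputable def facX (R : Type*) [CommRing R] {S : Type*} [AddCommSemigroup S]
    (s : S) (a : R) : SAlg R S := Xm R s 1 - Xm R (eIdem S s) a

/-- The invariant `d(S,R)`: the supremum of all `ℓ` such that some sequence `s_1,…,s_ℓ` over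
`S` satisfies `(X^{s_1} - a_1 X^{e(s_1)}) ⋯ (X^{s_ℓ} - a_ℓ X^{e(s_ℓ)}) ≠ 0` in `R[X;S]` for all
nonzero `a_1, …, a_ℓ ∈ R`. -/
noncomputable def dd (R : Type*) [CommRing R] (S : Type*) [AddCommSemigroup S] : ℕ∞ :=
  sSup {n : ℕ∞ | ∃ ℓ : ℕ, n = (ℓ : ℕ∞) ∧ ∃ s : Fin ℓ → S,
    ∀ a : Fin ℓ → R, (∀ i, a i ≠ 0) → ∏ i, facX R (s i) (a i) ≠ 0}

/-- `Λ(S)`: the minimum over all generating sets `A` of `S` of `1 + Σ_{a∈A} (ρ(a)-1)`. -/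
noncomputable def Lam (S : Type*) [AddCommSemigroup S] : ℕ :=
  sInf {n : ℕ | ∃ A : Finset S,
    AddSubsemigroup.closure (↑A : Set S) = ⊤ ∧ n = 1 + ∑ a ∈ A, (rho S a - 1)}

/-- An elementary semigroup: an ideal extension of a nilsemigroup `N` by a group with zero
`G ∪ {∞}`. -/
def IsElementary : Prop :=
  ∃ G N : Set S, G ∪ N = Set.univ ∧ Disjoint G N ∧ IsSubgroupSet S G ∧
    (∀ x ∈ N, ∀ s : S, s + x ∈ N) ∧
    ∃ z ∈ N, (∀ s : S, s + z = z) ∧ ∀ x ∈ N, ∃ n : ℕ, nsmul' S n x = z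


theorem gq_add (S : Type*) [AddCommSemigroup S] (x y : S) :
    gq S (x + y) = gq S x + gq S y := rfl

theorem gq_eq_iff (S : Type*) [AddCommSemigroup S] {x y : S} :
    gq S x = gq S y ↔ gEq S x y := AddCon.eq _

theorem msum_cons (S : Type*) [AddCommSemigroup S] (t : S) (T : Multiset S) :
    msum S (t ::ₘ T) = ↑t + msum S T := by
  simp [msum]

theorem msum_coe (S : Type*) [AddCommSemigroup S] (T : Multiset S) (hT : T ≠ 0) :
    ∃ y : S, msum S T = ↑y := by
  induction T using Multiset.induction with
  | empty => exact absurd rfl hT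
  | cons t T ih =>
    rcases eq_or_ne T 0 with rfl | hT0
    · exact ⟨t, by simp [msum]⟩
    · obtain ⟨y, hy⟩ := ih hT0
      exact ⟨t + y, by rw [msum_cons, hy]; rfl⟩

/-- Key lemma: an irreducible sequence over `S/𝓗` of length `ℓ+1` with sum `ā` yields a
strictly ascending chain of length `ℓ` above `a`. -/
theorem chain_of_irred (S : Type*) [AddCommSemigroup S] :
    ∀ (ℓ : ℕ) (a : S) (T : Multiset (GQuot S)), T.card = ℓ + 1 →
      ¬ IsReducible (GQuot S) T → msum (GQuot S) T = ↑(gq S a) →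
      ∃ c : ℕ → S, c 0 = a ∧ ∀ i < ℓ, gLt S (c i) (c (i + 1)) := by
  intro ℓ
  induction ℓ with
  | zero => intro a T _ _ _; exact ⟨fun _ => a, rfl, fun i hi => absurd hi (Nat.not_lt_zero i)⟩
  | succ ℓ ih =>
    intro a T hcard hirr hsum
    have hmem : ∃ t, t ∈ T := Multiset.card_pos_iff_exists_mem.mp (by omega)
    obtain ⟨t, ht⟩ := hmem
    obtain ⟨T', rfl⟩ := Multiset.exists_cons_of_mem ht
    have hcard' : T'.card = ℓ + 1 := by simpa using hcard
    have hT'0 : T' ≠ 0 := by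
      intro h; rw [h] at hcard'; simp at hcard'
    obtain ⟨y, hy⟩ := msum_coe (GQuot S) T' hT'0
    obtain ⟨b, rfl⟩ : ∃ b : S, gq S b = y := Quotient.exists_rep y
    obtain ⟨c₀, rfl⟩ : ∃ c₀ : S, gq S c₀ = t := Quotient.exists_rep t
    have hsum2 : gq S (c₀ + b) = gq S a := by
      have : msum (GQuot S) (gq S c₀ ::ₘ T') = ↑(gq S (c₀ + b)) := by
        rw [msum_cons, hy, gq_add]; rfl
      rw [this] at hsum
      exact WithZero.coe_inj.mp hsum
    have hab : gEq S a (c₀ + b) := (gq_eq_iff S).mp hsum2.symm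
    have hleb : gLe S a b :=
      gLe_trans S hab.1 (Or.inr ⟨c₀, add_comm c₀ b⟩)
    have hlt : gLt S a b := by
      refine ⟨hleb, fun hba => ?_⟩
      have heq : gq S a = gq S b := (gq_eq_iff S).mpr ⟨hleb, hba⟩
      apply hirr
      left
      refine ⟨T', Multiset.le_cons_self _ _, ?_, hT'0, ?_⟩
      · intro h
        have := congrArg Multiset.card h
        simp at this
      · rw [hy, hsum, heq]
    have hirr' : ¬ IsReducible (GQuot S) T' := by
      intro hred
      apply hirr
      rcases hred with ⟨T'', hle, hne, hne0, heq⟩ | ⟨hne, z, hz, hid⟩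
      · left
        refine ⟨gq S c₀ ::ₘ T'', Multiset.cons_le_cons _ hle, ?_, Multiset.cons_ne_zero, ?_⟩
        · intro h
          exact hne (Multiset.cons_inj_right _ |>.mp h)
        · rw [msum_cons, msum_cons, heq]
      · left
        refine ⟨{gq S c₀}, ?_, ?_, by simp, ?_⟩
        · exact Multiset.cons_le_cons _ (Multiset.zero_le _)
        · intro h
          have := congrArg Multiset.card h
          simp [hcard'] at this
        · have hz' : gq S b = z := WithZero.coe_inj.mp (hy.symm.trans hz)
          rw [msum_cons, hy, hz',
            show msum (GQuot S) {gq S c₀} = ↑(gq S c₀) from by simp [msum],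
            show (↑(gq S c₀) + (↑z : WithZero (GQuot S))) = ↑(gq S c₀ + z) from rfl,
            add_comm (gq S c₀) z, hid]
    obtain ⟨c, hc0, hc⟩ := ih b T' hcard' hirr' (by rw [hy])
    refine ⟨fun i => if i = 0 then a else c (i - 1), rfl, ?_⟩
    intro i hi
    match i with
    | 0 => simpa [hc0] using hlt
    | j + 1 =>
      simpa using hc j (by omega)

theorem stmt12 (S : Type*) [AddCommSemigroup S] [Fintype S] [Nonempty S] (a : S) :
    Drel (GQuot S) (gq S a) ≤ psi S a + 1 := by
  apply sSup_le
  rintro n ⟨T, hT0, hirr, hsum, rfl⟩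
  have hpos : 0 < T.card := Multiset.card_pos.mpr hT0
  obtain ⟨ℓ, hℓ⟩ : ∃ ℓ, T.card = ℓ + 1 := ⟨T.card - 1, by omega⟩
  obtain ⟨c, hc0, hc⟩ := chain_of_irred S ℓ a T hℓ hirr hsum
  have hmem : (ℓ : ℕ∞) ∈ {n : ℕ∞ | ∃ ℓ' : ℕ, n = (ℓ' : ℕ∞) ∧
      ∃ c : ℕ → S, c 0 = a ∧ ∀ i < ℓ', gLt S (c i) (c (i + 1))} := ⟨ℓ, rfl, c, hc0, hc⟩
  have hle : (ℓ : ℕ∞) ≤ psi S a := le_sSup hmem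
  calc (T.card : ℕ∞) = (ℓ : ℕ∞) + 1 := by rw [hℓ]; push_cast; ring
    _ ≤ psi S a + 1 := by exact add_le_add_left hle 1

end ZS
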